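/- (Necessity part of the entropy-minimality criterion.) Let Z° ∈ 𝒵_φ with Z° > 0 a.s. attain J° = inf_{Z ∈ 𝒵_φ} E[Z ln Z]. Then η := J° - ln Z° satisfies E[η Z°] = 0, Z° = e^{J° - η}, and E[η Z] ≤ 0 for all Z ∈ 𝒵_φ. -/

import Mathlib

open Real MeasureTheory Filter Topology

/-- `φ(x) = x ln x` for `x > 0`, `φ(0) = 0`. -/
noncomputable def phi (x : ℝ) : ℝ := x * Real.log x

lemma phi_ge {x : ℝ} (hx : 0 ≤ x) : x - 1 ≤ phi x := by
  rcases hx.eq_or_lt with h | h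
  · simp [phi, ← h]
  · have h1 : 1 - x⁻¹ ≤ Real.log x := Real.one_sub_inv_le_log_of_pos h
    have h2 : x * (1 - x⁻¹) ≤ x * Real.log x := mul_le_mul_of_nonneg_left h1 hx
    have h3 : x * (1 - x⁻¹) = x - 1 := by
      field_simp
    unfold phi
    linarith

lemma phi_slope_le {a d s t : ℝ} (ha : 0 ≤ a) (hs : 0 < s) (hst : s ≤ t) (hatd : 0 ≤ a + t * d) :
    (phi (a + s * d) - phi a) / s ≤ (phi (a + t * d) - phi a) / t := by
  have ht : 0 < t := hs.trans_le hst
  set l : ℝ := s / t with hl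
  have hl0 : 0 ≤ l := div_nonneg hs.le ht.le
  have hl1 : l ≤ 1 := div_le_one_of_le₀ hst ht.le
  have key := Real.convexOn_mul_log.2 (Set.mem_Ici.2 ha) (Set.mem_Ici.2 hatd)
      (by linarith : (0:ℝ) ≤ 1 - l) hl0 (by ring)
  have hcomb : (1 - l) • a + l • (a + t * d) = a + s * d := by
    simp only [smul_eq_mul, hl]
    field_simp
    ring
  rw [hcomb] at key
  have key' : phi (a + s * d) ≤ (1 - l) * phi a + l * phi (a + t * d) := by
    simpa [phi, smul_eq_mul] using key
  rw [div_le_div_iff₀ hs ht]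
  have h2 : l * (phi (a + t * d) - phi a) * t = (phi (a + t * d) - phi a) * s := by
    rw [hl, div_mul_eq_mul_div, div_mul_cancel₀ _ ht.ne']
    ring
  nlinarith [ht.le]

lemma phi_slope_tendsto {a d : ℝ} (ha : 0 < a) :
    Tendsto (fun n : ℕ => (phi (a + ((n:ℝ)+1)⁻¹ * d) - phi a) / ((n:ℝ)+1)⁻¹) atTop
      (𝓝 ((Real.log a + 1) * d)) := by
  have h1 : HasDerivAt (fun u : ℝ => a + u * d) d 0 := by
    simpa using ((hasDerivAt_id (0:ℝ)).mul_const d).const_add a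
  have h2 : HasDerivAt (fun x => x * Real.log x) (Real.log a + 1) (a + 0 * d) := by
    simpa using Real.hasDerivAt_mul_log ha.ne'
  have hF : HasDerivAt (fun u : ℝ => phi (a + u * d)) ((Real.log a + 1) * d) 0 :=
    by have := HasDerivAt.comp 0 h2 h1; exact this
  have hslope := hasDerivAt_iff_tendsto_slope.1 hF
  have hseq : Tendsto (fun n : ℕ => ((n:ℝ)+1)⁻¹) atTop (𝓝[≠] (0:ℝ)) := by
    refine tendsto_nhdsWithin_of_tendsto_nhds_of_eventually_within _ ?_ ?_
    · exact tendsto_one_div_add_atTop_nhds_zero_nat.congr fun n => one_div _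
    · exact Eventually.of_forall fun n => Set.mem_compl_singleton_iff.2 (by positivity)
  have := hslope.comp hseq
  refine this.congr fun n => ?_
  simp only [Function.comp_apply, slope_def_field, sub_zero, zero_mul, add_zero]

/-- Necessity part of the entropy-minimality criterion: if `Z° ∈ 𝒵_φ ∩ 𝒵^e` attains
`J° = inf_{Z ∈ 𝒵_φ} E[Z ln Z]`, then `η := J° - ln Z°` satisfies `E[η Z°] = 0`,
`Z° = e^{J° - η}`, and `E[η Z] ≤ 0` for all `Z ∈ 𝒵_φ`. -/
theorem entropy_criterion_necessary
    {Ω : Type*} [MeasurableSpace Ω] (μ : Measure Ω) [IsProbabilityMeasure μ]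
    (Zs : Set (Ω → ℝ)) (hconv : Convex ℝ Zs)
    (hdens : ∀ Z ∈ Zs, (∀ᵐ ω ∂μ, 0 ≤ Z ω) ∧ Integrable Z μ ∧ ∫ ω, Z ω ∂μ = 1)
    (Zo : Ω → ℝ) (hZo : Zo ∈ Zs) (hZopos : ∀ᵐ ω ∂μ, 0 < Zo ω)
    (hZophi : Integrable (fun ω => phi (Zo ω)) μ)
    (Jo : ℝ) (hJo : Jo = ∫ ω, phi (Zo ω) ∂μ)
    (hmin : ∀ Z ∈ Zs, Integrable (fun ω => phi (Z ω)) μ →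
      Jo ≤ ∫ ω, phi (Z ω) ∂μ) :
    (Integrable (fun ω => (Jo - Real.log (Zo ω)) * Zo ω) μ ∧
      ∫ ω, (Jo - Real.log (Zo ω)) * Zo ω ∂μ = 0) ∧
    (∀ᵐ ω ∂μ, Zo ω = Real.exp (Jo - (Jo - Real.log (Zo ω)))) ∧
    (∀ Z ∈ Zs, Integrable (fun ω => phi (Z ω)) μ →
      Integrable (fun ω => (Jo - Real.log (Zo ω)) * Z ω) μ ∧
      ∫ ω, (Jo - Real.log (Zo ω)) * Z ω ∂μ ≤ 0) := by
  obtain ⟨hZo_nn, hZo_int, hZo_one⟩ := hdens Zo hZo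
  have heq1 : (fun ω => (Jo - Real.log (Zo ω)) * Zo ω)
      = fun ω => Jo * Zo ω - phi (Zo ω) := by
    funext ω; simp only [phi]; ring
  have hP1int : Integrable (fun ω => (Jo - Real.log (Zo ω)) * Zo ω) μ := by
    rw [heq1]; exact (hZo_int.const_mul Jo).sub hZophi
  have hP1 : ∫ ω, (Jo - Real.log (Zo ω)) * Zo ω ∂μ = 0 := by
    rw [heq1, integral_sub (hZo_int.const_mul Jo) hZophi, integral_const_mul, hZo_one, ← hJo]
    ring
  have hP2 : ∀ᵐ ω ∂μ, Zo ω = Real.exp (Jo - (Jo - Real.log (Zo ω))) := by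
    filter_upwards [hZopos] with ω hω
    rw [show Jo - (Jo - Real.log (Zo ω)) = Real.log (Zo ω) by ring, Real.exp_log hω]
  refine ⟨⟨hP1int, hP1⟩, hP2, ?_⟩
  intro Z hZ hZphi
  obtain ⟨hZ_nn, hZ_int, hZ_one⟩ := hdens Z hZ
  set t : ℕ → ℝ := fun n => ((n:ℝ)+1)⁻¹ with ht
  have ht_pos : ∀ n, 0 < t n := fun n => by positivity
  have ht_le1 : ∀ n, t n ≤ 1 := fun n => by
    rw [ht]
    apply inv_le_one_of_one_le₀
    simp [Nat.cast_nonneg]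
  have ht_anti : ∀ {n m : ℕ}, n ≤ m → t m ≤ t n := by
    intro n m hnm
    apply inv_anti₀ (by positivity)
    have : (n:ℝ) ≤ m := Nat.cast_le.2 hnm
    linarith
  have hZt_mem : ∀ n, (fun ω => Zo ω + t n * (Z ω - Zo ω)) ∈ Zs := by
    intro n
    have h := hconv hZo hZ (by linarith [ht_pos n, ht_le1 n] : (0:ℝ) ≤ 1 - t n)
      (ht_pos n).le (by ring)
    convert h using 1
    funext ω
    simp only [Pi.add_apply, Pi.smul_apply, smul_eq_mul]
    ring
  have hZt_phi_int : ∀ n, Integrable (fun ω => phi (Zo ω + t n * (Z ω - Zo ω))) μ := by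
    intro n
    obtain ⟨hnn, hint, _⟩ := hdens _ (hZt_mem n)
    refine Integrable.mono'
      (g := fun ω => |(1 - t n) * phi (Zo ω) + t n * phi (Z ω)|
        + |Zo ω + t n * (Z ω - Zo ω) - 1|) ?_ ?_ ?_
    · exact (((hZophi.const_mul _).add (hZphi.const_mul _)).abs).add
        ((hint.sub (integrable_const 1)).abs)
    · exact Real.continuous_mul_log.comp_aestronglyMeasurable hint.aestronglyMeasurable
    · filter_upwards [hnn, hZo_nn, hZ_nn] with ω h1 h2 h3
      have hub : phi (Zo ω + t n * (Z ω - Zo ω)) ≤ (1 - t n) * phi (Zo ω) + t n * phi (Z ω) := by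
        have hc := Real.convexOn_mul_log.2 (Set.mem_Ici.2 h2) (Set.mem_Ici.2 h3)
          (by linarith [ht_le1 n] : (0:ℝ) ≤ 1 - t n) (ht_pos n).le (by ring)
        simpa [phi, smul_eq_mul,
          show (1 - t n) * Zo ω + t n * Z ω = Zo ω + t n * (Z ω - Zo ω) by ring] using hc
      have hlb : Zo ω + t n * (Z ω - Zo ω) - 1 ≤ phi (Zo ω + t n * (Z ω - Zo ω)) := phi_ge h1
      rw [Real.norm_eq_abs, abs_le]
      constructor
      · have := neg_abs_le (Zo ω + t n * (Z ω - Zo ω) - 1)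
        have := abs_nonneg ((1 - t n) * phi (Zo ω) + t n * phi (Z ω))
        linarith
      · have := le_abs_self ((1 - t n) * phi (Zo ω) + t n * phi (Z ω))
        have := abs_nonneg (Zo ω + t n * (Z ω - Zo ω) - 1)
        linarith
  set g : ℕ → Ω → ℝ := fun n ω => (phi (Zo ω + t n * (Z ω - Zo ω)) - phi (Zo ω)) / t n with hgdef
  have hg_int : ∀ n, Integrable (g n) μ := fun n => ((hZt_phi_int n).sub hZophi).div_const _
  have hg_nonneg : ∀ n, 0 ≤ ∫ ω, g n ω ∂μ := by
    intro n
    have hmin' := hmin _ (hZt_mem n) (hZt_phi_int n)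
    rw [hgdef]
    simp only
    rw [integral_div, integral_sub (hZt_phi_int n) hZophi]
    apply div_nonneg _ (ht_pos n).le
    rw [← hJo]
    linarith
  set h : Ω → ℝ := fun ω => (Real.log (Zo ω) + 1) * (Z ω - Zo ω) with hhdef
  have h_anti : ∀ᵐ ω ∂μ, Antitone fun n => g n ω := by
    filter_upwards [hZopos, hZ_nn] with ω hω hZω
    intro n m hnm
    exact phi_slope_le hω.le (ht_pos m) (ht_anti hnm)
      (by nlinarith [ht_pos n, ht_le1 n] : 0 ≤ Zo ω + t n * (Z ω - Zo ω))
  have h_tendsto : ∀ᵐ ω ∂μ, Tendsto (fun n => g n ω) atTop (𝓝 (h ω)) := by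
    filter_upwards [hZopos] with ω hω
    exact phi_slope_tendsto hω
  have h_aesm : AEStronglyMeasurable h μ := by
    have hZo_m : AEMeasurable Zo μ := hZo_int.aestronglyMeasurable.aemeasurable
    have hZ_m : AEMeasurable Z μ := hZ_int.aestronglyMeasurable.aemeasurable
    exact (((Real.measurable_log.comp_aemeasurable hZo_m).add aemeasurable_const).mul
      (hZ_m.sub hZo_m)).aestronglyMeasurable
  have hD_nn : ∀ᵐ ω ∂μ, 0 ≤ g 0 ω - h ω := by
    filter_upwards [h_anti, h_tendsto] with ω ha htd
    have : h ω ≤ g 0 ω := le_of_tendsto htd (Eventually.of_forall fun n => ha (Nat.zero_le n))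
    linarith
  have hlim : Tendsto (fun n => ∫⁻ ω, ENNReal.ofReal (g 0 ω - g n ω) ∂μ) atTop
      (𝓝 (∫⁻ ω, ENNReal.ofReal (g 0 ω - h ω) ∂μ)) := by
    refine lintegral_tendsto_of_tendsto_of_monotone ?_ ?_ ?_
    · exact fun n => ((hg_int 0).sub (hg_int n)).aemeasurable.ennreal_ofReal
    · filter_upwards [h_anti] with ω ha n m hnm
      exact ENNReal.ofReal_le_ofReal (by have := ha hnm; linarith)
    · filter_upwards [h_tendsto] with ω htd
      exact (ENNReal.continuous_ofReal.tendsto _).comp (tendsto_const_nhds.sub htd)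
  have hbound : ∀ n, ∫⁻ ω, ENNReal.ofReal (g 0 ω - g n ω) ∂μ
      ≤ ENNReal.ofReal (∫ ω, g 0 ω ∂μ) := by
    intro n
    have hnn : 0 ≤ᵐ[μ] fun ω => g 0 ω - g n ω := by
      filter_upwards [h_anti] with ω ha
      simpa using sub_nonneg.2 (ha (Nat.zero_le n))
    have hint0n : Integrable (fun ω => g 0 ω - g n ω) μ := (hg_int 0).sub (hg_int n)
    rw [← ofReal_integral_eq_lintegral_ofReal hint0n hnn]
    apply ENNReal.ofReal_le_ofReal
    rw [integral_sub (hg_int 0) (hg_int n)]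
    linarith [hg_nonneg n]
  have hDlt : ∫⁻ ω, ENNReal.ofReal (g 0 ω - h ω) ∂μ < ⊤ :=
    lt_of_le_of_lt (le_of_tendsto hlim (Eventually.of_forall hbound)) ENNReal.ofReal_lt_top
  have hD_int : Integrable (fun ω => g 0 ω - h ω) μ := by
    refine ⟨(hg_int 0).aestronglyMeasurable.sub h_aesm, ?_⟩
    rw [hasFiniteIntegral_iff_norm]
    have : (fun ω => ENNReal.ofReal ‖g 0 ω - h ω‖) =ᵐ[μ]
        fun ω => ENNReal.ofReal (g 0 ω - h ω) := by
      filter_upwards [hD_nn] with ω hω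
      rw [Real.norm_eq_abs, abs_of_nonneg hω]
    rw [lintegral_congr_ae this]
    exact hDlt
  have hh_int : Integrable h μ := by
    have h2 : Integrable (fun ω => g 0 ω - (g 0 ω - h ω)) μ := (hg_int 0).sub hD_int
    exact h2.congr (Eventually.of_forall fun ω => by ring)
  have h_int_tendsto : Tendsto (fun n => ∫ ω, g n ω ∂μ) atTop (𝓝 (∫ ω, h ω ∂μ)) :=
    integral_tendsto_of_tendsto_of_antitone hg_int hh_int h_anti h_tendsto
  have hh_nonneg : 0 ≤ ∫ ω, h ω ∂μ :=
    ge_of_tendsto h_int_tendsto (Eventually.of_forall hg_nonneg)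
  have key_eq : (fun ω => (Jo - Real.log (Zo ω)) * Z ω)
      = fun ω => Jo * Z ω - h ω - phi (Zo ω) + Z ω - Zo ω := by
    funext ω; simp only [phi, hhdef]; ring
  have i1 : Integrable (fun ω => Jo * Z ω) μ := hZ_int.const_mul Jo
  have i2 : Integrable (fun ω => Jo * Z ω - h ω) μ := i1.sub hh_int
  have i3 : Integrable (fun ω => Jo * Z ω - h ω - phi (Zo ω)) μ := i2.sub hZophi
  have i4 : Integrable (fun ω => Jo * Z ω - h ω - phi (Zo ω) + Z ω) μ := i3.add hZ_int
  have i5 : Integrable (fun ω => Jo * Z ω - h ω - phi (Zo ω) + Z ω - Zo ω) μ := i4.sub hZo_int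
  have hint : Integrable (fun ω => (Jo - Real.log (Zo ω)) * Z ω) μ := by
    rw [key_eq]; exact i5
  refine ⟨hint, ?_⟩
  rw [key_eq, integral_sub i4 hZo_int, integral_add i3 hZ_int, integral_sub i2 hZophi,
    integral_sub i1 hh_int, integral_const_mul, hZ_one, hZo_one, ← hJo]
  linarith
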